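/- arXiv:1607.04786 — 2 statements merged into one kernel-verified Lean document; each statement's English description precedes it below -/
import Mathlib

section
/- Let φ : Σ → (−∞,0) and ψ : Σ → (0,∞) be locally Hölder, suppose the limit α_lim exists with 0 < α_lim < ∞, and suppose t_∞ is finite. Then for every q ∈ ℝ, t̃(q) = −α_lim·q + t_∞; in particular t̃ is a strictly decreasing affine function of q. -/
open Filter MeasureTheory Set Topology
open scoped ENNReal NNReal

namespace CMS

/-- The discrete σ-algebra on the alphabet of positive integers. -/
instance : MeasurableSpace ℕ+ := ⊤

/-- The full shift `ℕ^ℕ` on the alphabet of positive integers. -/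
abbrev ShiftSpace : Type := ℕ → ℕ+

/-- The left shift map `(σx)ᵢ = x_{i+1}`. -/
def shift (x : ShiftSpace) : ShiftSpace := fun i => x (i + 1)

/-- The word formed by the first `n` symbols of `x`. -/
def word (x : ShiftSpace) (n : ℕ) : List ℕ+ := List.ofFn fun i : Fin n => x i

/-- The cylinder set determined by a word. -/
def cylinder (w : List ℕ+) : Set ShiftSpace :=
  {y | ∀ i : Fin w.length, y i = w.get i}

/-- Birkhoff sum `Σ_{i<n} f(σⁱ x)`. -/
def birkhoff (f : ShiftSpace → ℝ) (n : ℕ) (x : ShiftSpace) : ℝ :=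
  ∑ i ∈ Finset.range n, f (shift^[i] x)

/-- `f` is locally Hölder: `Vₙ(f) ≤ C θⁿ` for all `n ≥ 1`. -/
def LocHolder (f : ShiftSpace → ℝ) : Prop :=
  ∃ C : ℝ, 0 < C ∧ ∃ θ : ℝ, θ ∈ Set.Ioo (0:ℝ) 1 ∧
    ∀ n : ℕ, 1 ≤ n → ∀ w : List ℕ+, w.length = n →
      ∀ x ∈ cylinder w, ∀ y ∈ cylinder w, |f x - f y| ≤ C * θ ^ n

/-- The `n`-th partition function `Zₙ(f)`, valued in `ℝ≥0∞`
(using `exp (sup ...) = sup (exp ...)`). -/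
noncomputable def Zfun (n : ℕ) (f : ShiftSpace → ℝ) : ℝ≥0∞ :=
  ∑' w : {w : List ℕ+ // w.length = n},
    ⨆ y ∈ cylinder w.1, ENNReal.ofReal (Real.exp (birkhoff f n y))

/-- The logarithm `ℝ≥0∞ → EReal`. -/
noncomputable def elog (x : ℝ≥0∞) : EReal :=
  if x = 0 then ⊥ else if x = ⊤ then ⊤ else ((Real.log x.toReal : ℝ) : EReal)

/-- Topological pressure `P(f) = lim (1/n) log Zₙ(f) ∈ [-∞,∞]`
(formalised via `limsup`). -/
noncomputable def pressure (f : ShiftSpace → ℝ) : EReal :=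
  Filter.limsup (fun n : ℕ => (((n : ℝ)⁻¹ : ℝ) : EReal) * elog (Zfun n f)) Filter.atTop

/-- The temperature function `T(q) = inf {t | P(qφ - tψ) ≤ 0}`. -/
noncomputable def Tfun (φ ψ : ShiftSpace → ℝ) (q : ℝ) : ℝ :=
  sInf {t : ℝ | pressure (fun x => q * φ x - t * ψ x) ≤ 0}

/-- `t̃(q) = inf {t | P(qφ - tψ) < ∞}`. -/
noncomputable def ttilde (φ ψ : ShiftSpace → ℝ) (q : ℝ) : ℝ :=
  sInf {t : ℝ | pressure (fun x => q * φ x - t * ψ x) < ⊤}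

/-- `Q = {q | T(q) = t̃(q)}`. -/
def Qset (φ ψ : ShiftSpace → ℝ) : Set ℝ := {q | Tfun φ ψ q = ttilde φ ψ q}

/-- The set `{t | P(-tψ) < ∞}` whose infimum is `t_∞`. -/
def tinfSet (ψ : ShiftSpace → ℝ) : Set ℝ := {t | pressure (fun x => -(t * ψ x)) < ⊤}

/-- `t_∞ = inf {t | P(-tψ) < ∞}`. -/
noncomputable def tinfty (ψ : ShiftSpace → ℝ) : ℝ := sInf (tinfSet ψ)

/-- The constant sequence `ī = (i,i,...)`. -/
def constSeq (i : ℕ+) : ShiftSpace := fun _ => i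

/-- `μ` is a (σ-invariant probability) Gibbs measure for `f`. -/
def IsGibbs (f : ShiftSpace → ℝ) (μ : Measure ShiftSpace) : Prop :=
  IsProbabilityMeasure μ ∧ μ.map shift = μ ∧
  ∃ P : ℝ, pressure f = ((P : ℝ) : EReal) ∧
    ∃ M : ℝ, 1 ≤ M ∧ ∀ n : ℕ, 1 ≤ n → ∀ w : List ℕ+, w.length = n → ∀ x ∈ cylinder w,
      ENNReal.ofReal (M⁻¹ * Real.exp (-(n : ℝ) * P + birkhoff f n x)) ≤ μ (cylinder w) ∧
      μ (cylinder w) ≤ ENNReal.ofReal (M * Real.exp (-(n : ℝ) * P + birkhoff f n x))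

/-- Diameter with respect to an explicitly given metric on the shift space. -/
noncomputable def diam' (m : MetricSpace ShiftSpace) (s : Set ShiftSpace) : ℝ :=
  @Metric.diam _ m.toPseudoMetricSpace s

/-- Ball with respect to an explicitly given metric on the shift space. -/
def ball' (m : MetricSpace ShiftSpace) (x : ShiftSpace) (r : ℝ) : Set ShiftSpace :=
  @Metric.ball _ m.toPseudoMetricSpace x r

/-- Distance function of an explicitly given metric. -/
noncomputable def dist' (m : MetricSpace ShiftSpace) : ShiftSpace → ShiftSpace → ℝ :=
  @dist _ m.toPseudoMetricSpace.toDist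

/-- The given metric induces the product topology on `ℕ^ℕ`. -/
def compatibleTopology (m : MetricSpace ShiftSpace) : Prop :=
  m.toPseudoMetricSpace.toUniformSpace.toTopologicalSpace
    = (inferInstance : TopologicalSpace ShiftSpace)

/-- `ψ` is a metric potential for the metric `m`. -/
def IsMetricPotential (m : MetricSpace ShiftSpace) (ψ : ShiftSpace → ℝ) : Prop :=
  LocHolder ψ ∧ (∀ x, 0 < ψ x) ∧
  ∃ C : ℝ, 0 < C ∧ ∀ x : ShiftSpace, ∀ n : ℕ, 1 ≤ n →
    C⁻¹ * ∏ j ∈ Finset.range n, Real.exp (-ψ (shift^[j] x)) ≤ diam' m (cylinder (word x n)) ∧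
    diam' m (cylinder (word x n)) ≤ C * ∏ j ∈ Finset.range n, Real.exp (-ψ (shift^[j] x))

/-- Hausdorff dimension in `(Σ, d)` for an explicitly given metric. -/
noncomputable def dimH' (m : MetricSpace ShiftSpace) (s : Set ShiftSpace) : ℝ≥0∞ :=
  @dimH _ (@MetricSpace.toEMetricSpace _ m) s

/-- `x` has symbolic dimension `a` w.r.t. the Gibbs measure `μ` and metric `m`. -/
def HasSymbDim (m : MetricSpace ShiftSpace) (μ : Measure ShiftSpace) (x : ShiftSpace)
    (a : ℝ) : Prop :=
  Tendsto (fun n : ℕ => Real.log ((μ (cylinder (word x n))).toReal)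
      / Real.log (diam' m (cylinder (word x n)))) atTop (nhds a)

/-- The level set `X_α^s`. -/
def Xs (m : MetricSpace ShiftSpace) (μ : Measure ShiftSpace) (a : ℝ) : Set ShiftSpace :=
  {x | HasSymbDim m μ x a}

/-- The multifractal spectrum `f_μ(α) = dim_H X_α^s`. -/
noncomputable def mfSpectrum (m : MetricSpace ShiftSpace) (μ : Measure ShiftSpace) (a : ℝ) : ℝ :=
  (dimH' m (Xs m μ a)).toReal

/-- `φ` and `ψ` are non-cohomologous (in the class of locally Hölder functions). -/
def NonCohomologous (φ ψ : ShiftSpace → ℝ) : Prop :=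
  ¬ ∃ u : ShiftSpace → ℝ, LocHolder u ∧ ∀ x, φ x - ψ x = u x - u (shift x)

/-! ### The Gauss map -/

/-- The Gauss map `G(x) = 1/x mod 1`. -/
noncomputable def gauss (x : ℝ) : ℝ := Int.fract x⁻¹

/-- The inverse branch `G_b(x) = 1/(x+b)`. -/
noncomputable def gaussInv (b : ℕ+) (x : ℝ) : ℝ := 1 / (x + ((b : ℕ) : ℝ))

/-- The continued-fraction cylinder `Δ(a₁,…,aₙ) = G_{a₁}∘⋯∘G_{aₙ}((0,1))`. -/
noncomputable def gaussCyl (L : List ℕ+) : Set ℝ :=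
  (L.foldr (fun b f => gaussInv b ∘ f) id) '' Set.Ioo (0:ℝ) 1

/-- The continued-fraction digits: `a_{i+1}(x) = ⌊1/(Gⁱx)⌋` (junk value `1` otherwise). -/
noncomputable def cfDigit (x : ℝ) (i : ℕ) : ℕ+ :=
  if h : 0 < ⌊(gauss^[i] x)⁻¹⌋ then ⟨(⌊(gauss^[i] x)⁻¹⌋).toNat, by omega⟩ else 1

/-- The value of a finite continued fraction `[a₁,…,aₙ]`. -/
noncomputable def cfValList (L : List ℕ+) : ℝ :=
  L.foldr (fun a r => 1 / (((a : ℕ) : ℝ) + r)) 0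

/-- The coding map `π : Σ → [0,1]`, sending a digit sequence to the value of its
continued fraction (as a limit of the finite truncations). -/
noncomputable def codingMap (x : ShiftSpace) : ℝ :=
  limUnder Filter.atTop fun n => cfValList (word x n)

/-- The Gauss geometric potential `ψ(x) = log |G'(π x)|`. -/
noncomputable def gaussPsi (x : ShiftSpace) : ℝ := Real.log |deriv gauss (codingMap x)|

/-- Index of first disagreement of two distinct sequences. -/
def firstDiff (x y : ShiftSpace) (h : x ≠ y) : ℕ :=
  Nat.find (p := fun i => x i ≠ y i)
    (by
      by_contra hc
      exact h (funext fun i => by by_contra hne; exact hc ⟨i, hne⟩))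

/-- `m` is the metric on `Σ` defined from the Gauss cylinders:
`d(x,y) = diam Δ(x₁,…,x_k)` with `k` the longest common initial block
(and `d(x,y) = 1` if `x₁ ≠ y₁`). -/
def IsGaussMetric (m : MetricSpace ShiftSpace) : Prop :=
  ∀ x y : ShiftSpace, ∀ h : x ≠ y,
    dist' m x y =
      if x 0 = y 0 then Metric.diam (gaussCyl (word x (firstDiff x y h))) else 1



-- helper: membership in the 1-cylinder of x
lemma word_one (x : ShiftSpace) : word x 1 = [x 0] := by
  simp [word, List.ofFn_succ]

lemma mem_cyl_one {x y : ShiftSpace} (h : y 0 = x 0) : y ∈ cylinder (word x 1) := by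
  rw [word_one]
  intro i
  have hi : (i : ℕ) < 1 := by simpa using i.isLt
  have : (i : ℕ) = 0 := by omega
  simp [this, h]

lemma v1_bound (f : ShiftSpace → ℝ) (hf : LocHolder f) :
    ∃ B : ℝ, 0 ≤ B ∧ ∀ x : ShiftSpace, |f x - f (constSeq (x 0))| ≤ B := by
  obtain ⟨C, hC, θ, hθ, h⟩ := hf
  refine ⟨C * θ, mul_nonneg hC.le hθ.1.le, fun x => ?_⟩
  have := h 1 le_rfl (word x 1) (by simp [word]) x (mem_cyl_one rfl)
    (constSeq (x 0)) (mem_cyl_one rfl)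
  simpa using this

lemma elog_mono : Monotone elog := by
  intro x y hxy
  unfold elog
  rcases eq_or_ne x 0 with hx0 | hx0
  · simp [hx0]
  rcases eq_or_ne y ⊤ with hyT | hyT
  · have hy0 : y ≠ 0 := fun h => hx0 (le_antisymm (h ▸ hxy) zero_le)
    simp [hx0, hyT, hy0]
  · have hxT : x ≠ ⊤ := fun h => hyT (top_le_iff.mp (h ▸ hxy))
    have hy0 : y ≠ 0 := fun h => hx0 (le_antisymm (h ▸ hxy) zero_le)
    simp only [hx0, hxT, hyT, hy0, if_false, if_true]
    norm_cast
    exact Real.log_le_log (ENNReal.toReal_pos hx0 hxT) (ENNReal.toReal_mono hyT hxy)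

lemma elog_exp_mul (r : ℝ) (z : ℝ≥0∞) :
    elog (ENNReal.ofReal (Real.exp r) * z) ≤ (r : EReal) + elog z := by
  have hc0 : ENNReal.ofReal (Real.exp r) ≠ 0 := by
    simp [ENNReal.ofReal_eq_zero, not_le, Real.exp_pos]
  rcases eq_or_ne z 0 with hz | hz
  · simp [hz, elog]
  rcases eq_or_ne z ⊤ with hzT | hzT
  · have : ENNReal.ofReal (Real.exp r) * z = ⊤ := by
      rw [hzT]; exact ENNReal.mul_top hc0
    simp [this, elog, hzT]
  · have hne : ENNReal.ofReal (Real.exp r) * z ≠ 0 := by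
      simp [hc0, hz]
    have hneT : ENNReal.ofReal (Real.exp r) * z ≠ ⊤ := by
      exact ENNReal.mul_ne_top ENNReal.ofReal_ne_top hzT
    simp only [elog, hne, hneT, hz, hzT, if_false]
    rw [ENNReal.toReal_mul, ENNReal.toReal_ofReal (Real.exp_nonneg r)]
    rw [Real.log_mul (Real.exp_ne_zero r) (by
      exact ne_of_gt (ENNReal.toReal_pos hz hzT)), Real.log_exp]
    norm_cast


lemma Zfun_le_of_le (f g : ShiftSpace → ℝ) (K : ℝ) (h : ∀ x, f x ≤ g x + K) (n : ℕ) :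
    Zfun n f ≤ ENNReal.ofReal (Real.exp (n * K)) * Zfun n g := by
  rw [Zfun, Zfun, ← ENNReal.tsum_mul_left]
  refine ENNReal.tsum_le_tsum fun w => ?_
  refine iSup₂_le fun y hy => ?_
  have hb : birkhoff f n y ≤ birkhoff g n y + n * K := by
    have : birkhoff f n y ≤ ∑ i ∈ Finset.range n, (g (shift^[i] y) + K) :=
      Finset.sum_le_sum fun i _ => h _
    simpa [birkhoff, Finset.sum_add_distrib, mul_comm] using this
  calc ENNReal.ofReal (Real.exp (birkhoff f n y))
      ≤ ENNReal.ofReal (Real.exp (n * K) * Real.exp (birkhoff g n y)) := by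
        rw [← Real.exp_add]
        exact ENNReal.ofReal_le_ofReal (Real.exp_le_exp.2 (by linarith))
    _ = ENNReal.ofReal (Real.exp (n * K)) * ENNReal.ofReal (Real.exp (birkhoff g n y)) :=
        ENNReal.ofReal_mul (Real.exp_nonneg _)
    _ ≤ ENNReal.ofReal (Real.exp (n * K)) *
          ⨆ y ∈ cylinder w.1, ENNReal.ofReal (Real.exp (birkhoff g n y)) := by
        gcongr
        exact le_iSup₂ (f := fun y (_ : y ∈ cylinder w.1) =>
          ENNReal.ofReal (Real.exp (birkhoff g n y))) y hy

lemma scale_ineq (n : ℕ) (hn : 1 ≤ n) (K : ℝ) (b : EReal) :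
    (((n : ℝ)⁻¹ : ℝ) : EReal) * (((n : ℝ) * K : ℝ) + b) ≤ (K : EReal) + (((n : ℝ)⁻¹ : ℝ) : EReal) * b := by
  have hnpos : (0:ℝ) < (n:ℝ)⁻¹ := by positivity
  have hne : ((n:ℝ)) ≠ 0 := by positivity
  induction b using EReal.rec with
  | bot =>
      rw [EReal.add_bot, EReal.coe_mul_bot_of_pos hnpos, EReal.add_bot]
  | coe r =>
      norm_cast
      rw [mul_add, ← mul_assoc, inv_mul_cancel₀ hne, one_mul]
  | top =>
      rw [EReal.coe_add_top, EReal.coe_mul_top_of_pos hnpos, EReal.coe_add_top]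

/-- Key finiteness transfer lemma. -/
lemma pressure_lt_top_of_le (f g : ShiftSpace → ℝ) (K : ℝ) (h : ∀ x, f x ≤ g x + K)
    (hg : pressure g < ⊤) : pressure f < ⊤ := by
  obtain ⟨z, hz1, hz2⟩ := exists_between hg
  induction z using EReal.rec with
  | bot => exact absurd hz1 (by simp)
  | top => exact absurd hz2 (by simp)
  | coe M =>
  have hev : ∀ᶠ n : ℕ in atTop,
      (((n : ℝ)⁻¹ : ℝ) : EReal) * elog (Zfun n g) < (M : EReal) :=
    eventually_lt_of_limsup_lt hz1
  have hev2 : ∀ᶠ n : ℕ in atTop,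
      (((n : ℝ)⁻¹ : ℝ) : EReal) * elog (Zfun n f) ≤ ((K + M : ℝ) : EReal) := by
    filter_upwards [hev, eventually_ge_atTop 1] with n hn hn1
    have h1 : elog (Zfun n f) ≤ (((n : ℝ) * K : ℝ) : EReal) + elog (Zfun n g) :=
      le_trans (elog_mono (Zfun_le_of_le f g K h n)) (elog_exp_mul _ _)
    have h2 : (((n : ℝ)⁻¹ : ℝ) : EReal) * elog (Zfun n f)
        ≤ (((n : ℝ)⁻¹ : ℝ) : EReal) * ((((n : ℝ) * K : ℝ) : EReal) + elog (Zfun n g)) := by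
      apply mul_le_mul_of_nonneg_left h1
      exact_mod_cast (by positivity : (0:ℝ) ≤ (n:ℝ)⁻¹)
    refine h2.trans ((scale_ineq n hn1 K _).trans ?_)
    rw [EReal.coe_add]
    exact add_le_add_right hn.le _
  calc pressure f ≤ ((K + M : ℝ) : EReal) := limsup_le_of_le (h := hev2)
    _ < ⊤ := EReal.coe_lt_top _


lemma key_bound (φ ψ : ShiftSpace → ℝ) (hφ : LocHolder φ) (hψ : LocHolder ψ)
    (hψpos : ∀ x, 0 < ψ x) (α : ℝ)
    (hαlim : Tendsto (fun i : ℕ+ => φ (constSeq i) / (-ψ (constSeq i))) atTop (nhds α))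
    (δ : ℝ) (hδ : 0 < δ) (q : ℝ) :
    ∃ K : ℝ, ∀ x : ShiftSpace, q * (φ x + α * ψ x) ≤ δ * ψ x + K := by
  obtain ⟨Bφ, hBφ, hvφ⟩ := v1_bound φ hφ
  obtain ⟨Bψ, hBψ, hvψ⟩ := v1_bound ψ hψ
  set ε : ℝ := δ / (2 * (|q| + 1)) with hε
  have hεpos : 0 < ε := by positivity
  obtain ⟨N, hN⟩ := (Metric.tendsto_atTop.mp hαlim ε hεpos)
  -- bound for small indices
  have hfin : (Set.Iic N).Finite := Set.finite_Iic N
  have hfin2 : ((fun i : ℕ+ => q * (φ (constSeq i) + α * ψ (constSeq i))) '' Set.Iic N).Finite :=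
    hfin.image _
  obtain ⟨K₀, hK₀⟩ := hfin2.bddAbove
  refine ⟨|q| * (Bφ + |α| * Bψ) + max K₀ (δ * Bψ / 2), fun x => ?_⟩
  set i : ℕ+ := x 0 with hi
  set c : ShiftSpace := constSeq i with hc
  have h1 : |φ x - φ c| ≤ Bφ := hvφ x
  have h2 : |ψ x - ψ c| ≤ Bψ := hvψ x
  have hsplit : q * (φ x + α * ψ x)
      ≤ q * (φ c + α * ψ c) + |q| * (Bφ + |α| * Bψ) := by
    have : q * (φ x + α * ψ x) - q * (φ c + α * ψ c)
        = q * ((φ x - φ c) + α * (ψ x - ψ c)) := by ring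
    have habs : |q * ((φ x - φ c) + α * (ψ x - ψ c))| ≤ |q| * (Bφ + |α| * Bψ) := by
      rw [abs_mul]
      refine mul_le_mul_of_nonneg_left ?_ (abs_nonneg q)
      calc |(φ x - φ c) + α * (ψ x - ψ c)| ≤ |φ x - φ c| + |α * (ψ x - ψ c)| := abs_add_le _ _
        _ ≤ Bφ + |α| * Bψ := by
            rw [abs_mul]
            exact add_le_add h1 (mul_le_mul_of_nonneg_left h2 (abs_nonneg α))
    nlinarith [le_abs_self (q * ((φ x - φ c) + α * (ψ x - ψ c))), habs]
  have hψc : 0 < ψ c := hψpos c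
  have hmain : q * (φ c + α * ψ c) ≤ δ * ψ x + max K₀ (δ * Bψ / 2) := by
    rcases le_or_gt N i with hNi | hiN
    · -- large index: use the limit
      have hd := hN i hNi
      rw [Real.dist_eq] at hd
      have hratio : |φ c / ψ c + α| < ε := by
        have : φ c / (-ψ c) = -(φ c / ψ c) := by rw [div_neg]
        rw [this] at hd
        calc |φ c / ψ c + α| = |(-(φ c / ψ c)) - α| := by rw [abs_sub_comm]; ring_nf
          _ < ε := hd
      have heq : φ c + α * ψ c = (φ c / ψ c + α) * ψ c := by
        field_simp
      have hb : q * (φ c + α * ψ c) ≤ |q| * ε * ψ c := by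
        rw [heq]
        calc q * ((φ c / ψ c + α) * ψ c) ≤ |q * ((φ c / ψ c + α) * ψ c)| := le_abs_self _
          _ = |q| * |φ c / ψ c + α| * ψ c := by
              rw [abs_mul, abs_mul, abs_of_pos hψc]; ring
          _ ≤ |q| * ε * ψ c :=
              mul_le_mul_of_nonneg_right (mul_le_mul_of_nonneg_left hratio.le (abs_nonneg q)) hψc.le
      have hqe : |q| * ε ≤ δ / 2 := by
        rw [hε, mul_comm, div_mul_eq_mul_div, div_le_div_iff₀ (by positivity) (by norm_num : (0:ℝ) < 2)]
        nlinarith [abs_nonneg q, hδ.le]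
      have hψcx : ψ c ≤ ψ x + Bψ := by
        have := abs_le.mp h2
        linarith [this.1]
      calc q * (φ c + α * ψ c) ≤ |q| * ε * ψ c := hb
        _ ≤ (δ / 2) * ψ c := mul_le_mul_of_nonneg_right hqe hψc.le
        _ ≤ (δ / 2) * (ψ x + Bψ) := by nlinarith
        _ ≤ δ * ψ x + δ * Bψ / 2 := by nlinarith [hψpos x]
        _ ≤ δ * ψ x + max K₀ (δ * Bψ / 2) := by
            exact add_le_add_right (le_max_right _ _) _
    · -- small index
      have hmem : q * (φ c + α * ψ c) ≤ K₀ :=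
        hK₀ ⟨i, hiN.le, rfl⟩
      have : (0:ℝ) ≤ δ * ψ x := mul_nonneg hδ.le (hψpos x).le
      calc q * (φ c + α * ψ c) ≤ K₀ := hmem
        _ ≤ δ * ψ x + max K₀ (δ * Bψ / 2) := by
            nlinarith [le_max_left K₀ (δ * Bψ / 2)]
  linarith



lemma tinfSet_upset (ψ : ShiftSpace → ℝ) (hψpos : ∀ x, 0 < ψ x) {t t' : ℝ}
    (ht : t ∈ tinfSet ψ) (htt' : t ≤ t') : t' ∈ tinfSet ψ := by
  refine pressure_lt_top_of_le _ _ 0 (fun x => ?_) ht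
  have := (hψpos x).le
  nlinarith


/-- Proposition 2.8: `t̃(q) = -α_lim q + t_∞`, a strictly
decreasing affine function of `q`. -/
theorem ttilde_eq_affine
    (φ ψ : ShiftSpace → ℝ)
    (hφ : LocHolder φ) (hφneg : ∀ x, φ x < 0)
    (hψ : LocHolder ψ) (hψpos : ∀ x, 0 < ψ x)
    (αlim : ℝ)
    (hαlim : Tendsto (fun i : ℕ+ => φ (constSeq i) / (-ψ (constSeq i))) atTop (nhds αlim))
    (hαlim₀ : 0 < αlim)
    (htinf₁ : (tinfSet ψ).Nonempty) (htinf₂ : BddBelow (tinfSet ψ))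
    :
    (∀ q : ℝ, ttilde φ ψ q = -αlim * q + tinfty ψ) ∧ StrictAnti (ttilde φ ψ) := by
  have hforall : ∀ q : ℝ, ttilde φ ψ q = -αlim * q + tinfty ψ := by
    intro q
    set c : ℝ := -αlim * q + tinfty ψ with hcdef
    set S : Set ℝ := {t : ℝ | pressure (fun x => q * φ x - t * ψ x) < ⊤} with hSdef
    -- (i) every t > c is in S
    have hmemS : ∀ t : ℝ, c < t → t ∈ S := by
      intro t hct
      set δ : ℝ := (t + αlim * q - tinfty ψ) / 2 with hδdef
      have hδ : 0 < δ := by rw [hδdef]; simp only [hcdef] at hct; linarith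
      set s : ℝ := tinfty ψ + δ with hsdef
      have hsmem : s ∈ tinfSet ψ := by
        have hlt : sInf (tinfSet ψ) < s := by
          rw [hsdef]; unfold tinfty; linarith
        obtain ⟨s₀, hs₀mem, hs₀lt⟩ := exists_lt_of_csInf_lt htinf₁ hlt
        exact tinfSet_upset ψ hψpos hs₀mem hs₀lt.le
      obtain ⟨K, hK⟩ := key_bound φ ψ hφ hψ hψpos αlim hαlim δ hδ q
      refine pressure_lt_top_of_le _ _ K (fun x => ?_) hsmem
      have h1 := hK x
      have h2 := (hψpos x).le
      have hs : s = t + αlim * q - δ := by rw [hsdef, hδdef]; ring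
      nlinarith [hK x]
    -- (ii) c is a lower bound of S
    have hlb : ∀ t ∈ S, c ≤ t := by
      intro t htS
      by_contra hlt
      push_neg at hlt
      set δ : ℝ := (tinfty ψ - (t + αlim * q)) / 2 with hδdef
      have hδ : 0 < δ := by rw [hδdef]; simp only [hcdef] at hlt; linarith
      set s : ℝ := t + αlim * q + δ with hsdef
      obtain ⟨K, hK⟩ := key_bound φ ψ hφ hψ hψpos αlim hαlim δ hδ (-q)
      have hsmem : s ∈ tinfSet ψ := by
        refine pressure_lt_top_of_le _ _ K (fun x => ?_) htS
        have h1 := hK x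
        have h2 := (hψpos x).le
        nlinarith
      have : tinfty ψ ≤ s := csInf_le htinf₂ hsmem
      rw [hsdef, hδdef] at this
      simp only [hcdef] at hlt
      linarith
    have hSne : S.Nonempty := ⟨c + 1, hmemS _ (by linarith)⟩
    have hSbdd : BddBelow S := ⟨c, hlb⟩
    have h1 : c ≤ sInf S := le_csInf hSne hlb
    have h2 : sInf S ≤ c := by
      by_contra h
      push_neg at h
      obtain ⟨t, htc, htS⟩ := exists_between h
      exact absurd (csInf_le hSbdd (hmemS t htc)) (not_le.2 htS)
    exact le_antisymm h2 h1
  refine ⟨hforall, fun a b hab => ?_⟩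
  rw [hforall a, hforall b]
  nlinarith

end CMS
end

section
/- Let φ : Σ → (−∞,0) and ψ : Σ → (0,∞) be locally Hölder, suppose the limit α_lim exists with 0 < α_lim < ∞, and suppose t_∞ is finite. Then the set Q = {q ∈ ℝ : T(q) = t̃(q)} is order-connected: whenever q, q′ ∈ Q and q ≤ r ≤ q′, also r ∈ Q. Consequently Q is either the empty set, a single point, an interval, a half-line, or all of ℝ. -/
open Filter MeasureTheory Set Topology
open scoped ENNReal NNReal

namespace CMS

lemma elog_eq_log (x : ℝ≥0∞) : elog x = ENNReal.log x := rfl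

/-- canonical point of a cylinder -/
def extendW (w : List ℕ+) : ShiftSpace := fun k => if h : k < w.length then w.get ⟨k, h⟩ else 1

lemma extendW_mem (w : List ℕ+) : extendW w ∈ cylinder w := by
  intro i; simp [extendW, i.isLt]

lemma birkhoff_one (f : ShiftSpace → ℝ) (y : ShiftSpace) : birkhoff f 1 y = f y := by
  simp [birkhoff]

lemma constSeq_mem_cyl (i : ℕ+) : constSeq i ∈ cylinder [i] := by
  intro j
  fin_cases j <;> simp [constSeq]

lemma mem_cyl_single {i : ℕ+} {y : ShiftSpace} (hy : y ∈ cylinder [i]) : y 0 = i := by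
  have := hy ⟨0, by simp⟩
  simpa using this

/-- words of length 1 are `[i]` -/
def e1 : {w : List ℕ+ // w.length = 1} ≃ ℕ+ where
  toFun w := w.1.headI
  invFun i := ⟨[i], rfl⟩
  left_inv w := by
    obtain ⟨w, hw⟩ := w
    match w, hw with
    | [a], _ => rfl
  right_inv i := rfl

lemma Zfun_one (f : ShiftSpace → ℝ) :
    Zfun 1 f = ∑' i : ℕ+, ⨆ y ∈ cylinder [i], ENNReal.ofReal (Real.exp (f y)) := by
  rw [Zfun, ← e1.symm.tsum_eq]
  congr 1; funext i
  simp only [e1, Equiv.symm]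
  congr 1; funext y
  congr 1; funext _
  rw [birkhoff_one]

lemma Zfun_one_lower (f : ShiftSpace → ℝ) :
    ∑' i : ℕ+, ENNReal.ofReal (Real.exp (f (constSeq i))) ≤ Zfun 1 f := by
  rw [Zfun_one]
  refine ENNReal.tsum_le_tsum fun i => ?_
  exact le_iSup₂_of_le (constSeq i) (constSeq_mem_cyl i) (le_refl _)

lemma Zfun_one_upper (f : ShiftSpace → ℝ) (V : ℝ)
    (hV : ∀ i : ℕ+, ∀ x ∈ cylinder [i], f x ≤ f (constSeq i) + V) :
    Zfun 1 f ≤ ENNReal.ofReal (Real.exp V) * ∑' i : ℕ+, ENNReal.ofReal (Real.exp (f (constSeq i))) := by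
  rw [Zfun_one, ← ENNReal.tsum_mul_left]
  refine ENNReal.tsum_le_tsum fun i => ?_
  refine iSup₂_le fun y hy => ?_
  rw [← ENNReal.ofReal_mul (Real.exp_nonneg V)]
  rw [← Real.exp_add]
  exact ENNReal.ofReal_le_ofReal (Real.exp_le_exp.2 (by linarith [hV i y hy]))

lemma shift_iterate (k : ℕ) (y : ShiftSpace) : shift^[k] y = fun j => y (j + k) := by
  induction k with
  | zero => rfl
  | succ k ih =>
    funext j
    rw [Function.iterate_succ_apply', ih]
    simp only [shift]
    congr 1
    omega

lemma birkhoff_add (f : ShiftSpace → ℝ) (n m : ℕ) (y : ShiftSpace) :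
    birkhoff f (n + m) y = birkhoff f n y + birkhoff f m (shift^[n] y) := by
  unfold birkhoff
  rw [Finset.sum_range_add]
  congr 1
  refine Finset.sum_congr rfl fun i _ => ?_
  rw [← Function.iterate_add_apply, Nat.add_comm]

lemma mem_cyl_take {w : List ℕ+} {n : ℕ} {y : ShiftSpace}
    (hy : y ∈ cylinder w) : y ∈ cylinder (w.take n) := by
  intro i
  have hi : (i : ℕ) < w.length := by
    have := i.isLt; simp only [List.length_take] at this; omega
  have := hy ⟨i, hi⟩
  simp only [List.get_eq_getElem] at this ⊢
  rw [List.getElem_take]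
  exact this

lemma mem_cyl_drop {w : List ℕ+} {n : ℕ} {y : ShiftSpace}
    (hy : y ∈ cylinder w) : shift^[n] y ∈ cylinder (w.drop n) := by
  intro i
  have hi : n + (i : ℕ) < w.length := by
    have := i.isLt; simp only [List.length_drop] at this; omega
  have := hy ⟨n + i, hi⟩
  simp only [List.get_eq_getElem] at this ⊢
  rw [List.getElem_drop, shift_iterate]
  simpa [Nat.add_comm] using this

/-- split equivalence on words -/
def esplit (n m : ℕ) : {w : List ℕ+ // w.length = n + m} ≃
    ({w : List ℕ+ // w.length = n} × {w : List ℕ+ // w.length = m}) where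
  toFun w := (⟨w.1.take n, by simp [w.2]⟩, ⟨w.1.drop n, by simp [w.2]⟩)
  invFun p := ⟨p.1.1 ++ p.2.1, by simp [p.1.2, p.2.2]⟩
  left_inv w := by
    apply Subtype.ext
    simp
  right_inv p := by
    obtain ⟨⟨a, ha⟩, ⟨b, hb⟩⟩ := p
    simp only [Prod.mk.injEq, Subtype.mk.injEq]
    constructor
    · rw [← ha]; exact List.take_left
    · rw [← ha]; exact List.drop_left

noncomputable def ZA (f : ShiftSpace → ℝ) (n : ℕ) (w : {w : List ℕ+ // w.length = n}) : ℝ≥0∞ :=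
  ⨆ y ∈ cylinder w.1, ENNReal.ofReal (Real.exp (birkhoff f n y))

lemma Zfun_eq_tsum_ZA (f : ShiftSpace → ℝ) (n : ℕ) : Zfun n f = ∑' w, ZA f n w := rfl

lemma Zfun_submult (f : ShiftSpace → ℝ) (n m : ℕ) :
    Zfun (n + m) f ≤ Zfun n f * Zfun m f := by
  have key : ∀ w : {w : List ℕ+ // w.length = n + m},
      ZA f (n+m) w ≤ ZA f n ((esplit n m) w).1 * ZA f m ((esplit n m) w).2 := by
    intro w
    refine iSup₂_le fun y hy => ?_
    rw [birkhoff_add, Real.exp_add, ENNReal.ofReal_mul (Real.exp_nonneg _)]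
    exact mul_le_mul' (le_iSup₂_of_le y (mem_cyl_take hy) le_rfl)
      (le_iSup₂_of_le (shift^[n] y) (mem_cyl_drop hy) le_rfl)
  calc Zfun (n + m) f ≤ ∑' w, ZA f n ((esplit n m) w).1 * ZA f m ((esplit n m) w).2 :=
        ENNReal.tsum_le_tsum key
    _ = ∑' p : {w : List ℕ+ // w.length = n} × {w : List ℕ+ // w.length = m},
          ZA f n p.1 * ZA f m p.2 :=
        (esplit n m).tsum_eq (fun p => ZA f n p.1 * ZA f m p.2)
    _ = Zfun n f * Zfun m f := by
        rw [ENNReal.tsum_prod (f := fun a b => ZA f n a * ZA f m b),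
          Zfun_eq_tsum_ZA, Zfun_eq_tsum_ZA, ← ENNReal.tsum_mul_right]
        exact tsum_congr fun a => ENNReal.tsum_mul_left

lemma Zfun_zero (f : ShiftSpace → ℝ) : Zfun 0 f = 1 := by
  rw [Zfun]
  have : ∀ w : {w : List ℕ+ // w.length = 0},
      (⨆ y ∈ cylinder w.1, ENNReal.ofReal (Real.exp (birkhoff f 0 y))) = 1 := by
    intro w
    have hw : w.1 = [] := List.length_eq_zero_iff.mp w.2
    apply le_antisymm
    · refine iSup₂_le fun y hy => ?_
      simp [birkhoff]
    · refine le_iSup₂_of_le (constSeq 1) ?_ ?_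
      · rw [hw]; intro i; exact absurd i.isLt (by simp)
      · simp [birkhoff]
  rw [tsum_congr this]
  have : Unique {w : List ℕ+ // w.length = 0} :=
    ⟨⟨⟨[], rfl⟩⟩, fun w => Subtype.ext (List.length_eq_zero_iff.mp w.2)⟩
  rw [tsum_eq_single (default : {w : List ℕ+ // w.length = 0})
    (fun b hb => absurd (this.uniq b) hb)]
  
lemma Zfun_le_pow (f : ShiftSpace → ℝ) (n : ℕ) : Zfun n f ≤ (Zfun 1 f) ^ n := by
  induction n with
  | zero => simp [Zfun_zero]
  | succ n ih =>
    calc Zfun (n + 1) f ≤ Zfun n f * Zfun 1 f := Zfun_submult f n 1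
      _ ≤ (Zfun 1 f) ^ n * Zfun 1 f := mul_le_mul_left ih _
      _ = (Zfun 1 f) ^ (n + 1) := (pow_succ _ _).symm

lemma Zfun_pos (f : ShiftSpace → ℝ) (n : ℕ) : 0 < Zfun n f := by
  have h : ZA f n ⟨List.replicate n 1, List.length_replicate⟩ > 0 := by
    refine lt_of_lt_of_le ?_ (le_iSup₂_of_le (extendW (List.replicate n 1))
      (extendW_mem _) le_rfl)
    simp [Real.exp_pos]
  calc (0:ℝ≥0∞) < _ := h
    _ ≤ Zfun n f := ENNReal.le_tsum _

lemma elog_of_ne {x : ℝ≥0∞} (h0 : x ≠ 0) (ht : x ≠ ⊤) :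
    elog x = ((Real.log x.toReal : ℝ) : EReal) := by
  simp [elog, h0, ht]

lemma pressure_le_elog_Z1 (f : ShiftSpace → ℝ) : pressure f ≤ elog (Zfun 1 f) := by
  rcases eq_or_ne (Zfun 1 f) ⊤ with h | h
  · rw [h]; exact le_top
  set L : ℝ := Real.log (Zfun 1 f).toReal with hL
  have hZ1 : elog (Zfun 1 f) = (L : EReal) := elog_of_ne (Zfun_pos f 1).ne' h
  rw [hZ1]
  refine limsup_le_of_le (by isBoundedDefault) ?_
  filter_upwards [eventually_ge_atTop 1] with n hn
  have hZn_le : Zfun n f ≤ (Zfun 1 f) ^ n := Zfun_le_pow f n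
  have hZn_top : Zfun n f ≠ ⊤ := by
    refine ne_top_of_le_ne_top ?_ hZn_le
    exact (ENNReal.pow_ne_top h)
  have hpos : (0:ℝ) < (Zfun n f).toReal :=
    ENNReal.toReal_pos (Zfun_pos f n).ne' hZn_top
  have h1pos : (0:ℝ) < (Zfun 1 f).toReal :=
    ENNReal.toReal_pos (Zfun_pos f 1).ne' h
  have hlog : Real.log (Zfun n f).toReal ≤ (n : ℝ) * L := by
    have : (Zfun n f).toReal ≤ ((Zfun 1 f).toReal) ^ n := by
      rw [← ENNReal.toReal_pow]
      exact ENNReal.toReal_mono (ENNReal.pow_ne_top h) hZn_le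
    calc Real.log (Zfun n f).toReal ≤ Real.log (((Zfun 1 f).toReal) ^ n) :=
          Real.log_le_log hpos this
      _ = (n : ℝ) * L := by rw [Real.log_pow]
  rw [elog_of_ne (Zfun_pos f n).ne' hZn_top, ← EReal.coe_mul]
  refine EReal.coe_le_coe_iff.mpr ?_
  have hn' : (0:ℝ) < n := by exact_mod_cast hn
  calc (n:ℝ)⁻¹ * Real.log (Zfun n f).toReal ≤ (n:ℝ)⁻¹ * ((n:ℝ) * L) := by
        apply mul_le_mul_of_nonneg_left hlog (by positivity)
    _ = L := by field_simp

lemma pressure_nonpos_of_Z1_le_one (f : ShiftSpace → ℝ) (h : Zfun 1 f ≤ 1) :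
    pressure f ≤ 0 := by
  refine (pressure_le_elog_Z1 f).trans ?_
  rw [elog_eq_log]
  calc ENNReal.log (Zfun 1 f) ≤ ENNReal.log 1 := ENNReal.log_monotone h
    _ = 0 := ENNReal.log_one

/-- the point `i·(1,1,1,...)` -/
def idot (i : ℕ+) : ShiftSpace := fun j => if j = 0 then i else 1

lemma idot_mem (i : ℕ+) : idot i ∈ cylinder [i] := by
  intro j; fin_cases j; simp [idot]

lemma shift_idot (i : ℕ+) : shift (idot i) = constSeq 1 := by
  funext j; simp [shift, idot, constSeq]

lemma tsum_top_of_Z1_top {f : ShiftSpace → ℝ} {V : ℝ}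
    (hV : ∀ i : ℕ+, ∀ x ∈ cylinder [i], |f x - f (constSeq i)| ≤ V)
    (h : Zfun 1 f = ⊤) :
    (∑' i : ℕ+, ENNReal.ofReal (Real.exp (f (constSeq i)))) = ⊤ := by
  by_contra hne
  have := Zfun_one_upper f V (fun i x hx => by
    have := hV i x hx; rw [abs_le] at this; linarith [this.1])
  rw [h] at this
  exact absurd (this.trans_lt (ENNReal.mul_lt_top ENNReal.ofReal_lt_top (lt_top_iff_ne_top.2 hne))) (lt_irrefl _)

lemma Zn_top_of_Z1_top {f : ShiftSpace → ℝ} {V : ℝ}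
    (hV : ∀ i : ℕ+, ∀ x ∈ cylinder [i], |f x - f (constSeq i)| ≤ V)
    (h : Zfun 1 f = ⊤) (n : ℕ) (hn : 1 ≤ n) : Zfun n f = ⊤ := by
  obtain ⟨k, rfl⟩ : ∃ k, n = k + 1 := ⟨n - 1, by omega⟩
  -- the sum over idot points is infinite
  have hsum : (∑' i : ℕ+, ENNReal.ofReal (Real.exp (f (idot i)))) = ⊤ := by
    have h1 := tsum_top_of_Z1_top hV h
    by_contra hne
    have hle : ∀ i : ℕ+, ENNReal.ofReal (Real.exp (f (constSeq i)))
        ≤ ENNReal.ofReal (Real.exp V) * ENNReal.ofReal (Real.exp (f (idot i))) := by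
      intro i
      rw [← ENNReal.ofReal_mul (Real.exp_nonneg V), ← Real.exp_add]
      refine ENNReal.ofReal_le_ofReal (Real.exp_le_exp.2 ?_)
      have := hV i (idot i) (idot_mem i)
      rw [abs_le] at this
      linarith [this.2]
    have h2 : (∑' i : ℕ+, ENNReal.ofReal (Real.exp V) * ENNReal.ofReal (Real.exp (f (idot i)))) < ⊤ := by
      rw [ENNReal.tsum_mul_left]
      exact ENNReal.mul_lt_top ENNReal.ofReal_lt_top (lt_top_iff_ne_top.2 hne)
    have := (ENNReal.tsum_le_tsum hle).trans_lt h2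
    rw [h1] at this
    exact absurd this (lt_irrefl _)
  -- inject words i :: replicate k 1
  set c : ℝ := birkhoff f k (constSeq 1) with hc
  have hι : Function.Injective
      (fun i : ℕ+ => (⟨i :: List.replicate k 1, by simp⟩ : {w : List ℕ+ // w.length = k + 1})) := by
    intro a b hab
    simpa using congrArg (fun w => w.1.headI) hab
  have hmem : ∀ i : ℕ+, idot i ∈ cylinder (i :: List.replicate k 1) := by
    intro i j
    rcases j with ⟨jv, hj⟩
    cases jv with
    | zero => simp [idot]
    | succ jv =>
      simp only [List.length_cons, List.length_replicate] at hj
      simp [idot, List.getElem_replicate]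
  have hbound : ∀ i : ℕ+,
      ENNReal.ofReal (Real.exp c) * ENNReal.ofReal (Real.exp (f (idot i)))
        ≤ ZA f (k+1) ⟨i :: List.replicate k 1, by simp⟩ := by
    intro i
    refine le_trans ?_ (le_iSup₂_of_le (idot i) (hmem i) le_rfl)
    rw [← ENNReal.ofReal_mul (Real.exp_nonneg c), ← Real.exp_add]
    apply ENNReal.ofReal_le_ofReal
    apply Real.exp_le_exp.2
    have heq : birkhoff f (k+1) (idot i) = f (idot i) + c := by
      have h1k : k + 1 = 1 + k := by omega
      rw [h1k, birkhoff_add, birkhoff_one, Function.iterate_one, shift_idot]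
    rw [heq]
    linarith
  rw [eq_top_iff]
  calc (⊤:ℝ≥0∞) = ENNReal.ofReal (Real.exp c) * ∑' i : ℕ+, ENNReal.ofReal (Real.exp (f (idot i))) := by
        rw [hsum, ENNReal.mul_top (by positivity)]
    _ = ∑' i : ℕ+, ENNReal.ofReal (Real.exp c) * ENNReal.ofReal (Real.exp (f (idot i))) :=
        ENNReal.tsum_mul_left.symm
    _ ≤ ∑' i : ℕ+, ZA f (k+1) ⟨i :: List.replicate k 1, by simp⟩ :=
        ENNReal.tsum_le_tsum hbound
    _ ≤ Zfun (k+1) f := ENNReal.tsum_comp_le_tsum_of_injective hι (ZA f (k+1))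

lemma pressure_eq_top_of_Z1_top {f : ShiftSpace → ℝ} {V : ℝ}
    (hV : ∀ i : ℕ+, ∀ x ∈ cylinder [i], |f x - f (constSeq i)| ≤ V)
    (h : Zfun 1 f = ⊤) : pressure f = ⊤ := by
  have : ∀ᶠ n : ℕ in atTop, (((n : ℝ)⁻¹ : ℝ) : EReal) * elog (Zfun n f) = (⊤ : EReal) := by
    filter_upwards [eventually_ge_atTop 1] with n hn
    rw [Zn_top_of_Z1_top hV h n hn]
    have : elog ⊤ = ⊤ := rfl
    rw [this, EReal.mul_top_of_pos]
    exact_mod_cast inv_pos.2 (by exact_mod_cast hn : (0:ℝ) < n)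
  rw [pressure, limsup_congr this, limsup_const]

lemma pressure_lt_top_iff_tsum {f : ShiftSpace → ℝ} {V : ℝ}
    (hV : ∀ i : ℕ+, ∀ x ∈ cylinder [i], |f x - f (constSeq i)| ≤ V) :
    pressure f < ⊤ ↔ (∑' i : ℕ+, ENNReal.ofReal (Real.exp (f (constSeq i)))) < ⊤ := by
  constructor
  · intro hp
    by_contra hs
    rw [not_lt, top_le_iff] at hs
    have hZ1 : Zfun 1 f = ⊤ := by
      rw [eq_top_iff, ← hs]
      exact Zfun_one_lower f
    exact absurd (pressure_eq_top_of_Z1_top hV hZ1) hp.ne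
  · intro hs
    have hZ1 : Zfun 1 f < ⊤ := by
      refine lt_of_le_of_lt (Zfun_one_upper f V (fun i x hx => by
        have := hV i x hx; rw [abs_le] at this; linarith [this.1])) ?_
      exact ENNReal.mul_lt_top ENNReal.ofReal_lt_top hs
    calc pressure f ≤ elog (Zfun 1 f) := pressure_le_elog_Z1 f
      _ < ⊤ := by
        rw [elog_eq_log]
        exact lt_top_iff_ne_top.2 (by simp [ENNReal.log_eq_top_iff, hZ1.ne])

lemma tsum_holder {I : Type} (A B : I → ℝ≥0∞) {l m : ℝ} (hl : 0 < l) (hm : 0 < m)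
    (hlm : l + m = 1) :
    ∑' i, (A i) ^ l * (B i) ^ m ≤ (∑' i, A i) ^ l * (∑' i, B i) ^ m := by
  letI : MeasurableSpace I := ⊤
  letI : MeasurableSingletonClass I := ⟨fun _ => MeasurableSpace.measurableSet_top⟩
  have hl1 : l < 1 := by linarith
  have hpq : (1/l).HolderConjugate (1/m) := Real.holderConjugate_one_div hl hm hlm
  have hmeas : ∀ (F : I → ℝ≥0∞), Measurable F := fun F s _ => MeasurableSpace.measurableSet_top
  have H := ENNReal.lintegral_mul_le_Lp_mul_Lq (Measure.count : Measure I) hpq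
    (hmeas (fun i => A i ^ l)).aemeasurable (hmeas (fun i => B i ^ m)).aemeasurable
  rw [lintegral_count, lintegral_count, lintegral_count] at H
  have e1 : ∀ x : ℝ≥0∞, (x ^ l) ^ (1/l : ℝ) = x := by
    intro x
    rw [← ENNReal.rpow_mul, mul_one_div_cancel hl.ne', ENNReal.rpow_one]
  have e2 : ∀ x : ℝ≥0∞, (x ^ m) ^ (1/m : ℝ) = x := by
    intro x
    rw [← ENNReal.rpow_mul, mul_one_div_cancel hm.ne', ENNReal.rpow_one]
  simp only [Pi.mul_apply, e1, e2, one_div_one_div] at H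
  exact H

lemma birkhoff_comb (f g : ShiftSpace → ℝ) (l m : ℝ) (n : ℕ) (y : ShiftSpace) :
    birkhoff (fun x => l * f x + m * g x) n y = l * birkhoff f n y + m * birkhoff g n y := by
  simp [birkhoff, Finset.mul_sum, Finset.sum_add_distrib]

lemma Zfun_holder (f g : ShiftSpace → ℝ) {l m : ℝ} (hl : 0 < l) (hm : 0 < m)
    (hlm : l + m = 1) (n : ℕ) :
    Zfun n (fun x => l * f x + m * g x) ≤ (Zfun n f) ^ l * (Zfun n g) ^ m := by
  have key : ∀ w : {w : List ℕ+ // w.length = n},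
      ZA (fun x => l * f x + m * g x) n w ≤ (ZA f n w) ^ l * (ZA g n w) ^ m := by
    intro w
    refine iSup₂_le fun y hy => ?_
    have : Real.exp (birkhoff (fun x => l * f x + m * g x) n y)
        = Real.exp (birkhoff f n y) ^ l * Real.exp (birkhoff g n y) ^ m := by
      rw [birkhoff_comb, Real.exp_add, ← Real.exp_mul, ← Real.exp_mul, mul_comm l, mul_comm m]
    rw [this, ENNReal.ofReal_mul (by positivity),
      ← ENNReal.ofReal_rpow_of_pos (Real.exp_pos _), ← ENNReal.ofReal_rpow_of_pos (Real.exp_pos _)]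
    exact mul_le_mul' (ENNReal.rpow_le_rpow (le_iSup₂_of_le y hy le_rfl) hl.le)
      (ENNReal.rpow_le_rpow (le_iSup₂_of_le y hy le_rfl) hm.le)
  calc Zfun n (fun x => l * f x + m * g x) ≤ ∑' w, (ZA f n w) ^ l * (ZA g n w) ^ m :=
        ENNReal.tsum_le_tsum key
    _ ≤ (Zfun n f) ^ l * (Zfun n g) ^ m := tsum_holder _ _ hl hm hlm

lemma Zfun_lt_top_of_ulow {f : ShiftSpace → ℝ} {n : ℕ} (hn : 1 ≤ n) {ε : ℝ}
    (h : (((n : ℝ)⁻¹ : ℝ) : EReal) * elog (Zfun n f) < (ε : EReal)) :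
    Zfun n f ≤ ENNReal.ofReal (Real.exp (n * ε)) := by
  have hnR : (0:ℝ) < n := by exact_mod_cast hn
  have hZtop : Zfun n f ≠ ⊤ := by
    intro htop
    rw [htop] at h
    have : elog ⊤ = ⊤ := rfl
    rw [this, EReal.mul_top_of_pos (by exact_mod_cast inv_pos.2 hnR)] at h
    exact absurd h (not_lt.2 le_top)
  have hpos : (0:ℝ) < (Zfun n f).toReal := ENNReal.toReal_pos (Zfun_pos f n).ne' hZtop
  rw [elog_of_ne (Zfun_pos f n).ne' hZtop, ← EReal.coe_mul, EReal.coe_lt_coe_iff] at h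
  have hlog : Real.log (Zfun n f).toReal < n * ε := by
    rw [inv_mul_lt_iff₀ hnR] at h
    exact h
  have : (Zfun n f).toReal ≤ Real.exp (n * ε) := ((Real.log_lt_iff_lt_exp hpos).1 hlog).le
  calc Zfun n f = ENNReal.ofReal (Zfun n f).toReal := (ENNReal.ofReal_toReal hZtop).symm
    _ ≤ ENNReal.ofReal (Real.exp (n * ε)) := ENNReal.ofReal_le_ofReal this

lemma pressure_convex {f g : ShiftSpace → ℝ} {l m : ℝ} (hl : 0 < l) (hm : 0 < m)
    (hlm : l + m = 1) (hf : pressure f ≤ 0) (hg : pressure g ≤ 0) :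
    pressure (fun x => l * f x + m * g x) ≤ 0 := by
  have key : ∀ ε : ℝ, 0 < ε → pressure (fun x => l * f x + m * g x) ≤ (ε : EReal) := by
    intro ε hε
    have hεE : (0 : EReal) < (ε : EReal) := by exact_mod_cast hε
    have hfe := eventually_lt_of_limsup_lt (lt_of_le_of_lt hf hεE) (u := fun n : ℕ =>
      (((n : ℝ)⁻¹ : ℝ) : EReal) * elog (Zfun n f))
    have hge := eventually_lt_of_limsup_lt (lt_of_le_of_lt hg hεE) (u := fun n : ℕ =>
      (((n : ℝ)⁻¹ : ℝ) : EReal) * elog (Zfun n g))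
    refine limsup_le_of_le (by isBoundedDefault) ?_
    filter_upwards [hfe, hge, eventually_ge_atTop 1] with n hnf hng hn
    have hnR : (0:ℝ) < n := by exact_mod_cast hn
    have hZf := Zfun_lt_top_of_ulow hn hnf
    have hZg := Zfun_lt_top_of_ulow hn hng
    have hZh : Zfun n (fun x => l * f x + m * g x) ≤ ENNReal.ofReal (Real.exp (n * ε)) := by
      calc Zfun n (fun x => l * f x + m * g x) ≤ (Zfun n f) ^ l * (Zfun n g) ^ m :=
            Zfun_holder f g hl hm hlm n
        _ ≤ (ENNReal.ofReal (Real.exp (n * ε))) ^ l * (ENNReal.ofReal (Real.exp (n * ε))) ^ m :=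
            mul_le_mul' (ENNReal.rpow_le_rpow hZf hl.le) (ENNReal.rpow_le_rpow hZg hm.le)
        _ = ENNReal.ofReal (Real.exp (n * ε)) := by
            rw [ENNReal.ofReal_rpow_of_pos (Real.exp_pos _),
              ENNReal.ofReal_rpow_of_pos (Real.exp_pos _),
              ← ENNReal.ofReal_mul (by positivity), ← Real.exp_mul, ← Real.exp_mul,
              ← Real.exp_add]
            congr 2
            linear_combination ((n:ℝ) * ε) * hlm
    have hZhtop : Zfun n (fun x => l * f x + m * g x) ≠ ⊤ :=
      ne_top_of_le_ne_top ENNReal.ofReal_ne_top hZh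
    have hpos : (0:ℝ) < (Zfun n (fun x => l * f x + m * g x)).toReal :=
      ENNReal.toReal_pos (Zfun_pos _ n).ne' hZhtop
    rw [elog_of_ne (Zfun_pos _ n).ne' hZhtop, ← EReal.coe_mul]
    refine EReal.coe_le_coe_iff.mpr ?_
    have htoReal : (Zfun n (fun x => l * f x + m * g x)).toReal ≤ Real.exp (n * ε) := by
      have := ENNReal.toReal_mono ENNReal.ofReal_ne_top hZh
      rwa [ENNReal.toReal_ofReal (Real.exp_nonneg _)] at this
    have hlog : Real.log ((Zfun n (fun x => l * f x + m * g x)).toReal) ≤ n * ε := by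
      calc Real.log _ ≤ Real.log (Real.exp (n * ε)) := Real.log_le_log hpos htoReal
        _ = n * ε := Real.log_exp _
    calc (n:ℝ)⁻¹ * Real.log ((Zfun n (fun x => l * f x + m * g x)).toReal)
        ≤ (n:ℝ)⁻¹ * (n * ε) := mul_le_mul_of_nonneg_left hlog (by positivity)
      _ = ε := by field_simp
  by_contra hc
  push_neg at hc
  obtain ⟨ε, hε0, hεlt⟩ := EReal.exists_between_coe_real hc
  have h0ε : (0:ℝ) < ε := by exact_mod_cast hε0
  exact absurd (key ε h0ε) (not_le.2 hεlt)

lemma pnat_eventually_finite {P : ℕ+ → Prop} (h : ∀ᶠ i in atTop, P i) :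
    {i : ℕ+ | ¬ P i}.Finite := by
  obtain ⟨N, hN⟩ := eventually_atTop.1 h
  refine Set.Finite.subset (Set.finite_Iio N) fun i hi => ?_
  simp only [Set.mem_setOf_eq] at hi
  by_contra hlt
  exact hi (hN i (not_lt.1 (by simpa [Set.mem_Iio] using hlt)))

/-- comparison except on finitely many indices preserves finiteness of `tsum` -/
lemma tsum_lt_top_of_le_cofinite {g h : ℕ+ → ℝ≥0∞} (hfin : {i | ¬ g i ≤ h i}.Finite)
    (hg_ne : ∀ i, g i ≠ ⊤) (hh : ∑' i, h i < ⊤) : ∑' i, g i < ⊤ := by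
  set s : Set ℕ+ := {i | ¬ g i ≤ h i}
  have hle : ∀ i, g i ≤ h i + s.indicator g i := by
    intro i
    by_cases hi : i ∈ s
    · rw [Set.indicator_of_mem hi]
      exact le_add_self
    · rw [Set.indicator_of_notMem hi, add_zero]
      exact not_not.1 hi
  calc ∑' i, g i ≤ ∑' i, (h i + s.indicator g i) := ENNReal.tsum_le_tsum hle
    _ = (∑' i, h i) + ∑' i, s.indicator g i := ENNReal.tsum_add
    _ < ⊤ := by
      refine ENNReal.add_lt_top.2 ⟨hh, ?_⟩
      rw [tsum_eq_sum (s := hfin.toFinset) (fun b hb => Set.indicator_of_notMem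
        (by simpa using hb) g)]
      refine ENNReal.sum_lt_top.2 fun i _ => ?_
      exact lt_top_iff_ne_top.2 (by
        by_cases hi : i ∈ s
        · rw [Set.indicator_of_mem hi]; exact hg_ne i
        · rw [Set.indicator_of_notMem hi]; exact ENNReal.zero_ne_top)

section potentials
variable {φ ψ : ShiftSpace → ℝ}

lemma locHolder_var1 {f : ShiftSpace → ℝ} (hf : LocHolder f) :
    ∃ V : ℝ, 0 ≤ V ∧ ∀ i : ℕ+, ∀ x ∈ cylinder [i], |f x - f (constSeq i)| ≤ V := by
  obtain ⟨C, hC, θ, hθ, hH⟩ := hf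
  refine ⟨C * θ, mul_nonneg hC.le hθ.1.le, fun i x hx => ?_⟩
  have := hH 1 le_rfl [i] rfl x hx (constSeq i) (constSeq_mem_cyl i)
  simpa using this

lemma var1_pot (hφ : LocHolder φ) (hψ : LocHolder ψ) (q t : ℝ) :
    ∃ V : ℝ, 0 ≤ V ∧ ∀ i : ℕ+, ∀ x ∈ cylinder [i],
      |(q * φ x - t * ψ x) - (q * φ (constSeq i) - t * ψ (constSeq i))| ≤ V := by
  obtain ⟨V1, hV1, h1⟩ := locHolder_var1 hφ
  obtain ⟨V2, hV2, h2⟩ := locHolder_var1 hψ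
  refine ⟨|q| * V1 + |t| * V2, by positivity, fun i x hx => ?_⟩
  have e : (q * φ x - t * ψ x) - (q * φ (constSeq i) - t * ψ (constSeq i))
      = q * (φ x - φ (constSeq i)) - t * (ψ x - ψ (constSeq i)) := by ring
  rw [e]
  calc |q * (φ x - φ (constSeq i)) - t * (ψ x - ψ (constSeq i))|
      ≤ |q * (φ x - φ (constSeq i))| + |t * (ψ x - ψ (constSeq i))| := abs_sub _ _
    _ = |q| * |φ x - φ (constSeq i)| + |t| * |ψ x - ψ (constSeq i)| := by
        rw [abs_mul, abs_mul]
    _ ≤ |q| * V1 + |t| * V2 := by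
        have hh1 := h1 i x hx
        have hh2 := h2 i x hx
        have := abs_nonneg q
        have := abs_nonneg t
        nlinarith

lemma var1_neg (hψ : LocHolder ψ) (t : ℝ) :
    ∃ V : ℝ, 0 ≤ V ∧ ∀ i : ℕ+, ∀ x ∈ cylinder [i],
      |(-(t * ψ x)) - (-(t * ψ (constSeq i)))| ≤ V := by
  obtain ⟨V2, hV2, h2⟩ := locHolder_var1 hψ
  refine ⟨|t| * V2, by positivity, fun i x hx => ?_⟩
  have e : (-(t * ψ x)) - (-(t * ψ (constSeq i))) = -(t * (ψ x - ψ (constSeq i))) := by ring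
  rw [e, abs_neg, abs_mul]
  exact mul_le_mul_of_nonneg_left (h2 i x hx) (abs_nonneg t)

/-- finiteness of pressure of `qφ - tψ` in terms of the sum over constant sequences -/
lemma pressure_pot_lt_top_iff (hφ : LocHolder φ) (hψ : LocHolder ψ) (q t : ℝ) :
    pressure (fun x => q * φ x - t * ψ x) < ⊤
      ↔ (∑' i : ℕ+, ENNReal.ofReal
          (Real.exp (q * φ (constSeq i) - t * ψ (constSeq i)))) < ⊤ := by
  obtain ⟨V, _, hV⟩ := var1_pot hφ hψ q t
  exact pressure_lt_top_iff_tsum hV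

lemma tinfSet_mem_iff (hψ : LocHolder ψ) (t : ℝ) :
    t ∈ tinfSet ψ
      ↔ (∑' i : ℕ+, ENNReal.ofReal (Real.exp (-(t * ψ (constSeq i))))) < ⊤ := by
  obtain ⟨V, _, hV⟩ := var1_neg hψ t
  exact pressure_lt_top_iff_tsum hV

end potentials

lemma word_length (x : ShiftSpace) (n : ℕ) : (word x n).length = n := by
  simp [word]

lemma self_mem_word_cyl (x : ShiftSpace) (n : ℕ) : x ∈ cylinder (word x n) := by
  intro i
  rw [List.get_eq_getElem]; simp [word]

lemma mem_word_cyl {x y : ShiftSpace} {n : ℕ} (h : ∀ i < n, y i = x i) :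
    y ∈ cylinder (word x n) := by
  intro i
  have hi : (i : ℕ) < n := by
    have := i.isLt; simpa [word] using this
  rw [List.get_eq_getElem]; simp only [word, List.getElem_ofFn]
  exact h i hi

lemma locHolder_continuous {f : ShiftSpace → ℝ} (hf : LocHolder f) : Continuous f := by
  obtain ⟨C, hC, θ, hθ, H⟩ := hf
  rw [continuous_iff_continuousAt]
  intro x
  rw [ContinuousAt, Metric.tendsto_nhds]
  intro ε hε
  obtain ⟨n, hn⟩ : ∃ n : ℕ, C * θ ^ (n + 1) < ε := by
    have h1 : Tendsto (fun n : ℕ => C * θ ^ (n + 1)) atTop (𝓝 0) := by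
      have := (tendsto_pow_atTop_nhds_zero_of_lt_one hθ.1.le hθ.2).const_mul C
      rw [mul_zero] at this
      exact this.comp (tendsto_add_atTop_nat 1)
    exact (h1.eventually_lt_const hε).exists
  set U : Set ShiftSpace := ⋂ i ∈ Finset.range (n + 1), {y : ShiftSpace | y i = x i} with hU
  have hUopen : IsOpen U := by
    refine isOpen_biInter_finset fun i _ => ?_
    have : {y : ShiftSpace | y i = x i} = (fun y : ShiftSpace => y i) ⁻¹' {x i} := rfl
    rw [this]
    exact (continuous_apply i).isOpen_preimage _ (isOpen_discrete _)
  have hxU : x ∈ U := by simp [hU]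
  filter_upwards [hUopen.mem_nhds hxU] with y hy
  have hyc : y ∈ cylinder (word x (n + 1)) := by
    refine mem_word_cyl fun i hi => ?_
    have : y ∈ {z : ShiftSpace | z i = x i} := by
      have := Set.mem_iInter₂.1 hy i (Finset.mem_range.2 hi)
      exact this
    exact this
  have := H (n + 1) (by omega) (word x (n + 1)) (word_length x (n + 1)) y hyc x
    (self_mem_word_cyl x (n + 1))
  rw [Real.dist_eq]
  exact lt_of_le_of_lt this hn

lemma birkhoff_nonneg {ψ : ShiftSpace → ℝ} (hψpos : ∀ x, 0 < ψ x) (n : ℕ) (x : ShiftSpace) :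
    0 ≤ birkhoff ψ n x :=
  Finset.sum_nonneg fun i _ => (hψpos _).le

/-- window lemma: uniformly often the orbit sees a definite amount of `ψ` -/
lemma exists_window {ψ : ShiftSpace → ℝ} (hψ : LocHolder ψ) (hψpos : ∀ x, 0 < ψ x)
    (hgrow : Tendsto (fun i : ℕ+ => ψ (constSeq i)) atTop atTop) :
    ∃ δ : ℝ, 0 < δ ∧ δ ≤ 1 ∧ ∃ k : ℕ, 1 ≤ k ∧
      ∀ x : ShiftSpace, ∃ p ≤ k, δ ≤ ψ (shift^[p] x) := by
  obtain ⟨V, hV0, hVar⟩ := locHolder_var1 hψ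
  set F : Set ℕ+ := {i | ψ (constSeq i) ≤ V + 1} with hF
  have hFfin : F.Finite := by
    have hev : ∀ᶠ i : ℕ+ in atTop, V + 1 < ψ (constSeq i) :=
      hgrow.eventually_gt_atTop (V + 1)
    refine (pnat_eventually_finite hev).subset fun i hi => ?_
    simpa [hF] using hi
  have hbig : ∀ x : ShiftSpace, x 0 ∉ F → 1 ≤ ψ x := by
    intro x hx
    have hmem : x ∈ cylinder [x 0] := by
      intro i; fin_cases i; rfl
    have h1 := hVar (x 0) x hmem
    rw [abs_le] at h1
    have h2 : V + 1 < ψ (constSeq (x 0)) := by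
      by_contra hc
      exact hx (by simpa [hF] using not_lt.1 hc)
    linarith [h1.1]
  by_cases hFne : F.Nonempty
  · obtain ⟨f₀, hf₀⟩ := hFne
    set K : Set ShiftSpace := Set.pi Set.univ (fun _ : ℕ => F) with hK
    have hKcomp : IsCompact K := isCompact_univ_pi fun _ => hFfin.isCompact
    have hKne : K.Nonempty := ⟨fun _ => f₀, fun i _ => hf₀⟩
    obtain ⟨z, hzK, hzmin⟩ := hKcomp.exists_isMinOn hKne (locHolder_continuous hψ).continuousOn
    set δF : ℝ := ψ z with hδF
    have hδFpos : 0 < δF := hψpos z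
    obtain ⟨C, hC, θ, hθ, H⟩ := hψ
    obtain ⟨k, hk1, hk⟩ : ∃ k : ℕ, 1 ≤ k ∧ C * θ ^ k ≤ δF / 2 := by
      have h1 : Tendsto (fun n : ℕ => C * θ ^ (n + 1)) atTop (𝓝 0) := by
        have := (tendsto_pow_atTop_nhds_zero_of_lt_one hθ.1.le hθ.2).const_mul C
        rw [mul_zero] at this
        exact this.comp (tendsto_add_atTop_nat 1)
      obtain ⟨n, hn⟩ := (h1.eventually_lt_const (by positivity : (0:ℝ) < δF / 2)).exists
      exact ⟨n + 1, by omega, hn.le⟩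
    refine ⟨min (δF / 2) 1, by positivity, min_le_right _ _, k, hk1, fun x => ?_⟩
    by_cases hd : ∃ p, p < k ∧ x p ∉ F
    · obtain ⟨p, hpk, hp⟩ := hd
      refine ⟨p, hpk.le, ?_⟩
      have : (shift^[p] x) 0 = x p := by rw [shift_iterate]; simp
      have h1 : 1 ≤ ψ (shift^[p] x) := hbig _ (by rw [this]; exact hp)
      exact le_trans (min_le_right _ _) h1
    · push_neg at hd
      refine ⟨0, Nat.zero_le k, ?_⟩
      simp only [Function.iterate_zero, id_eq]
      set y : ShiftSpace := fun j => if h : j < k then x j else f₀ with hy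
      have hyK : y ∈ K := by
        intro j _
        by_cases hj : j < k
        · simpa [hy, hj] using hd j hj
        · simpa [hy, hj] using hf₀
      have hymem : y ∈ cylinder (word x k) := by
        refine mem_word_cyl fun i hi => ?_
        simp [hy, hi]
      have hvar := H k hk1 (word x k) (word_length x k) x (self_mem_word_cyl x k) y hymem
      have hzy : δF ≤ ψ y := hzmin hyK
      rw [abs_le] at hvar
      have : δF / 2 ≤ ψ x := by linarith [hvar.1, hk]
      exact le_trans (min_le_left _ _) this
  · refine ⟨1, one_pos, le_rfl, 1, le_rfl, fun x => ?_⟩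
    refine ⟨0, Nat.zero_le 1, ?_⟩
    simp only [Function.iterate_zero, id_eq]
    exact hbig x fun hx => hFne ⟨x 0, hx⟩

/-- linear lower bound for Birkhoff sums of `ψ` -/
lemma exists_birkhoff_lower {ψ : ShiftSpace → ℝ} (hψ : LocHolder ψ) (hψpos : ∀ x, 0 < ψ x)
    (hgrow : Tendsto (fun i : ℕ+ => ψ (constSeq i)) atTop atTop) :
    ∃ δ : ℝ, 0 < δ ∧ ∃ W : ℝ, 0 ≤ W ∧
      ∀ n : ℕ, ∀ x : ShiftSpace, δ * n - W ≤ birkhoff ψ n x := by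
  obtain ⟨δ, hδ0, hδ1, k, hk1, hwin⟩ := exists_window hψ hψpos hgrow
  have hblock : ∀ x : ShiftSpace, δ ≤ birkhoff ψ (k + 1) x := by
    intro x
    obtain ⟨p, hpk, hp⟩ := hwin x
    calc δ ≤ ψ (shift^[p] x) := hp
      _ ≤ birkhoff ψ (k + 1) x := by
        refine Finset.single_le_sum (f := fun i => ψ (shift^[i] x))
          (fun i _ => (hψpos _).le) ?_
        exact Finset.mem_range.2 (by omega)
  have hmul : ∀ m : ℕ, ∀ x : ShiftSpace, δ * m ≤ birkhoff ψ (m * (k + 1)) x := by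
    intro m
    induction m with
    | zero => intro x; simp [birkhoff]
    | succ m ih =>
      intro x
      have : (m + 1) * (k + 1) = (k + 1) + m * (k + 1) := by ring
      rw [this, birkhoff_add]
      push_cast
      have := ih (shift^[k+1] x)
      have := hblock x
      linarith
  refine ⟨δ / (k + 1), by positivity, δ, hδ0.le, fun n x => ?_⟩
  obtain ⟨m, r, hr, hn⟩ : ∃ m r : ℕ, r < k + 1 ∧ n = m * (k + 1) + r :=
    ⟨n / (k + 1), n % (k + 1), Nat.mod_lt n (by omega), by
      rw [mul_comm]; exact (Nat.div_add_mod n (k + 1)).symm⟩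
  have h1 : birkhoff ψ (m * (k + 1)) x ≤ birkhoff ψ n x := by
    conv_rhs => rw [hn]
    rw [birkhoff_add]
    have := birkhoff_nonneg hψpos r (shift^[m * (k + 1)] x)
    linarith
  have h2 : δ * m ≤ birkhoff ψ (m * (k + 1)) x := hmul m x
  have hk0 : (0:ℝ) < (k : ℝ) + 1 := by positivity
  have hnR : (n : ℝ) = (m : ℝ) * ((k : ℝ) + 1) + (r : ℝ) := by exact_mod_cast hn
  have hrR : (r : ℝ) ≤ (k : ℝ) := by exact_mod_cast Nat.lt_succ_iff.1 hr
  have h3 : δ / (k + 1) * n - δ ≤ δ * m := by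
    rw [div_mul_eq_mul_div, sub_le_iff_le_add, div_le_iff₀ hk0]
    have hδr : δ * r ≤ δ * k := mul_le_mul_of_nonneg_left hrR hδ0.le
    nlinarith [hδ0.le]
  linarith

section main
variable {φ ψ : ShiftSpace → ℝ} {αlim : ℝ}

lemma pnat_atTop_le_cofinite : (atTop : Filter ℕ+) ≤ cofinite := by
  intro s hs
  rw [mem_cofinite] at hs
  obtain ⟨N, hN⟩ := hs.bddAbove
  rw [mem_atTop_sets]
  refine ⟨N + 1, fun i hi => ?_⟩
  by_contra hc
  have h1 : i ≤ N := hN hc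
  have h2 : ((N : ℕ) + 1 : ℕ) ≤ (i : ℕ) := by exact_mod_cast hi
  have h3 : (i : ℕ) ≤ (N : ℕ) := by exact_mod_cast h1
  omega

lemma psi_grow (hψ : LocHolder ψ) (hψpos : ∀ x, 0 < ψ x)
    (htinf₁ : (tinfSet ψ).Nonempty) :
    Tendsto (fun i : ℕ+ => ψ (constSeq i)) atTop atTop := by
  obtain ⟨s₀, hs₀⟩ := htinf₁
  have hS : (∑' i : ℕ+, ENNReal.ofReal (Real.exp (-(s₀ * ψ (constSeq i))))) < ⊤ :=
    (tinfSet_mem_iff hψ s₀).1 hs₀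
  have hs₀pos : 0 < s₀ := by
    by_contra hc
    push_neg at hc
    have hge : ∀ i : ℕ+, (1 : ℝ≥0∞) ≤ ENNReal.ofReal (Real.exp (-(s₀ * ψ (constSeq i)))) := by
      intro i
      rw [show (1:ℝ≥0∞) = ENNReal.ofReal (Real.exp 0) by simp]
      refine ENNReal.ofReal_le_ofReal (Real.exp_le_exp.2 ?_)
      have := hψpos (constSeq i)
      nlinarith
    have : (⊤:ℝ≥0∞) ≤ ∑' i : ℕ+, ENNReal.ofReal (Real.exp (-(s₀ * ψ (constSeq i)))) := by
      rw [← ENNReal.tsum_const_eq_top_of_ne_zero (α := ℕ+) (one_ne_zero (α := ℝ≥0∞))]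
      exact ENNReal.tsum_le_tsum hge
    exact absurd (lt_of_le_of_lt this hS) (lt_irrefl _)
  have hto : Tendsto (fun i : ℕ+ => ENNReal.ofReal (Real.exp (-(s₀ * ψ (constSeq i)))))
      atTop (nhds 0) :=
    (ENNReal.tendsto_cofinite_zero_of_tsum_ne_top hS.ne).mono_left pnat_atTop_le_cofinite
  rw [tendsto_atTop]
  intro M
  have hev := hto.eventually_lt_const
    (show (0:ℝ≥0∞) < ENNReal.ofReal (Real.exp (-(s₀ * M))) by
      exact ENNReal.ofReal_pos.2 (Real.exp_pos _))
  filter_upwards [hev] with i hi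
  by_contra hc
  push_neg at hc
  refine absurd hi (not_lt.2 (ENNReal.ofReal_le_ofReal (Real.exp_le_exp.2 ?_)))
  nlinarith [hc.le]

lemma pot_const_eq (hψpos : ∀ x, 0 < ψ x) (q t : ℝ) (i : ℕ+) :
    q * φ (constSeq i) - t * ψ (constSeq i)
      = -((t + q * (φ (constSeq i) / (-ψ (constSeq i)))) * ψ (constSeq i)) := by
  have hne : ψ (constSeq i) ≠ 0 := (hψpos _).ne'
  have h : φ (constSeq i) / (-ψ (constSeq i)) * ψ (constSeq i) = -φ (constSeq i) := by
    rw [div_mul_eq_mul_div, mul_div_assoc, div_neg, div_self hne]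
    ring
  linear_combination q * h

/-- membership in the finiteness region from `t > t_∞ - q α` -/
lemma B_mem_of_lt (hφ : LocHolder φ) (hψ : LocHolder ψ) (hψpos : ∀ x, 0 < ψ x)
    (hαlim : Tendsto (fun i : ℕ+ => φ (constSeq i) / (-ψ (constSeq i))) atTop (nhds αlim))
    (htinf₁ : (tinfSet ψ).Nonempty) (htinf₂ : BddBelow (tinfSet ψ))
    {q t : ℝ} (ht : tinfty ψ - q * αlim < t) :
    pressure (fun x => q * φ x - t * ψ x) < ⊤ := by
  rw [pressure_pot_lt_top_iff hφ hψ]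
  have hmid : tinfty ψ < (tinfty ψ + (t + q * αlim)) / 2 := by linarith
  obtain ⟨s', hs'mem, hs'⟩ := exists_lt_of_csInf_lt htinf₁ hmid
  have hS' : (∑' i : ℕ+, ENNReal.ofReal (Real.exp (-(s' * ψ (constSeq i))))) < ⊤ :=
    (tinfSet_mem_iff hψ s').1 hs'mem
  have htend : Tendsto (fun i : ℕ+ => t + q * (φ (constSeq i) / (-ψ (constSeq i))))
      atTop (nhds (t + q * αlim)) :=
    tendsto_const_nhds.add (hαlim.const_mul q)
  have hev : ∀ᶠ i : ℕ+ in atTop,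
      ENNReal.ofReal (Real.exp (q * φ (constSeq i) - t * ψ (constSeq i)))
        ≤ ENNReal.ofReal (Real.exp (-(s' * ψ (constSeq i)))) := by
    have hlt : s' < t + q * αlim := by linarith
    filter_upwards [htend.eventually (eventually_ge_nhds hlt)] with i hi
    rw [pot_const_eq hψpos]
    refine ENNReal.ofReal_le_ofReal (Real.exp_le_exp.2 ?_)
    have := (hψpos (constSeq i)).le
    nlinarith
  exact tsum_lt_top_of_le_cofinite (pnat_eventually_finite hev)
    (fun i => ENNReal.ofReal_ne_top) hS'

/-- converse: finiteness forces `t ≥ t_∞ - q α` -/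
lemma B_le (hφ : LocHolder φ) (hψ : LocHolder ψ) (hψpos : ∀ x, 0 < ψ x)
    (hαlim : Tendsto (fun i : ℕ+ => φ (constSeq i) / (-ψ (constSeq i))) atTop (nhds αlim))
    (htinf₂ : BddBelow (tinfSet ψ))
    {q t : ℝ} (h : pressure (fun x => q * φ x - t * ψ x) < ⊤) :
    tinfty ψ - q * αlim ≤ t := by
  by_contra hc
  push_neg at hc
  set s : ℝ := ((t + q * αlim) + tinfty ψ) / 2 with hs
  have hs1 : t + q * αlim < s := by rw [hs]; linarith
  have hs2 : s < tinfty ψ := by rw [hs]; linarith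
  have hsnot : s ∉ tinfSet ψ := fun hmem => absurd (csInf_le htinf₂ hmem) (not_le.2 hs2)
  have hStop : (∑' i : ℕ+, ENNReal.ofReal (Real.exp (-(s * ψ (constSeq i))))) = ⊤ := by
    by_contra hne
    exact hsnot ((tinfSet_mem_iff hψ s).2 (lt_top_iff_ne_top.2 hne))
  rw [pressure_pot_lt_top_iff hφ hψ] at h
  have htend : Tendsto (fun i : ℕ+ => t + q * (φ (constSeq i) / (-ψ (constSeq i))))
      atTop (nhds (t + q * αlim)) :=
    tendsto_const_nhds.add (hαlim.const_mul q)
  have hev : ∀ᶠ i : ℕ+ in atTop,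
      ENNReal.ofReal (Real.exp (-(s * ψ (constSeq i))))
        ≤ ENNReal.ofReal (Real.exp (q * φ (constSeq i) - t * ψ (constSeq i))) := by
    filter_upwards [htend.eventually (eventually_le_nhds hs1)] with i hi
    rw [pot_const_eq hψpos]
    refine ENNReal.ofReal_le_ofReal (Real.exp_le_exp.2 ?_)
    have := (hψpos (constSeq i)).le
    nlinarith
  have := tsum_lt_top_of_le_cofinite (pnat_eventually_finite hev)
    (fun i => ENNReal.ofReal_ne_top) h
  rw [hStop] at this
  exact absurd this (lt_irrefl _)

lemma ttilde_eq (hφ : LocHolder φ) (hψ : LocHolder ψ) (hψpos : ∀ x, 0 < ψ x)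
    (hαlim : Tendsto (fun i : ℕ+ => φ (constSeq i) / (-ψ (constSeq i))) atTop (nhds αlim))
    (htinf₁ : (tinfSet ψ).Nonempty) (htinf₂ : BddBelow (tinfSet ψ)) (q : ℝ) :
    ttilde φ ψ q = tinfty ψ - q * αlim := by
  rw [ttilde]
  apply le_antisymm
  · refine le_of_forall_pos_le_add fun ε hε => ?_
    refine csInf_le ⟨tinfty ψ - q * αlim, fun t ht => B_le hφ hψ hψpos hαlim htinf₂ ht⟩ ?_
    exact B_mem_of_lt hφ hψ hψpos hαlim htinf₁ htinf₂ (by linarith)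
  · refine le_csInf ?_ fun t ht => B_le hφ hψ hψpos hαlim htinf₂ ht
    exact ⟨tinfty ψ - q * αlim + 1,
      B_mem_of_lt hφ hψ hψpos hαlim htinf₁ htinf₂ (by linarith)⟩

end main

lemma elog_div_le {f : ShiftSpace → ℝ} {n : ℕ} (hn : 1 ≤ n) {a : ℝ}
    (h : Zfun n f ≤ ENNReal.ofReal (Real.exp a)) :
    (((n : ℝ)⁻¹ : ℝ) : EReal) * elog (Zfun n f) ≤ ((a / n : ℝ) : EReal) := by
  have hZtop : Zfun n f ≠ ⊤ := ne_top_of_le_ne_top ENNReal.ofReal_ne_top h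
  have hpos := ENNReal.toReal_pos (Zfun_pos f n).ne' hZtop
  have htr : (Zfun n f).toReal ≤ Real.exp a := by
    have := ENNReal.toReal_mono ENNReal.ofReal_ne_top h
    rwa [ENNReal.toReal_ofReal (Real.exp_nonneg _)] at this
  have hlog : Real.log (Zfun n f).toReal ≤ a := (Real.log_le_iff_le_exp hpos).2 htr
  rw [elog_of_ne (Zfun_pos f n).ne' hZtop, ← EReal.coe_mul, EReal.coe_le_coe_iff]
  have hnR : (0:ℝ) < n := by exact_mod_cast hn
  calc (n:ℝ)⁻¹ * Real.log (Zfun n f).toReal ≤ (n:ℝ)⁻¹ * a :=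
        mul_le_mul_of_nonneg_left hlog (by positivity)
    _ = a / n := by rw [inv_mul_eq_div]

lemma le_ZA {f : ShiftSpace → ℝ} {n : ℕ} (w : {w : List ℕ+ // w.length = n})
    {y : ShiftSpace} (hy : y ∈ cylinder w.1) :
    ENNReal.ofReal (Real.exp (birkhoff f n y)) ≤ ZA f n w :=
  le_iSup₂_of_le y hy le_rfl

lemma birkhoff_sub (f g : ShiftSpace → ℝ) (c : ℝ) (n : ℕ) (y : ShiftSpace) :
    birkhoff (fun x => f x - c * g x) n y = birkhoff f n y - c * birkhoff g n y := by
  simp [birkhoff, Finset.sum_sub_distrib, Finset.mul_sum]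

section main
variable {φ ψ : ShiftSpace → ℝ} {αlim : ℝ}

lemma A_nonempty (hφ : LocHolder φ) (hψ : LocHolder ψ) (hψpos : ∀ x, 0 < ψ x)
    (hαlim : Tendsto (fun i : ℕ+ => φ (constSeq i) / (-ψ (constSeq i))) atTop (nhds αlim))
    (htinf₁ : (tinfSet ψ).Nonempty) (htinf₂ : BddBelow (tinfSet ψ)) (q : ℝ) :
    ∃ t : ℝ, pressure (fun x => q * φ x - t * ψ x) ≤ 0 := by
  have hgrow := psi_grow hψ hψpos htinf₁
  obtain ⟨δ, hδ, W, hW, hbl⟩ := exists_birkhoff_lower hψ hψpos hgrow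
  set t₁ : ℝ := tinfty ψ - q * αlim + 1 with ht₁
  have hfin : pressure (fun x => q * φ x - t₁ * ψ x) < ⊤ :=
    B_mem_of_lt hφ hψ hψpos hαlim htinf₁ htinf₂ (by rw [ht₁]; linarith)
  have htsum := (pressure_pot_lt_top_iff hφ hψ q t₁).1 hfin
  obtain ⟨V, hV0, hVar⟩ := var1_pot hφ hψ q t₁
  have hZ1 : Zfun 1 (fun x => q * φ x - t₁ * ψ x) < ⊤ := by
    refine lt_of_le_of_lt (Zfun_one_upper _ V (fun i x hx => by
      have := hVar i x hx; rw [abs_le] at this; linarith [this.1])) ?_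
    exact ENNReal.mul_lt_top ENNReal.ofReal_lt_top htsum
  set L : ℝ := Real.log (Zfun 1 (fun x => q * φ x - t₁ * ψ x)).toReal with hL
  have hZ1pos : (0:ℝ) < (Zfun 1 (fun x => q * φ x - t₁ * ψ x)).toReal :=
    ENNReal.toReal_pos (Zfun_pos _ 1).ne' hZ1.ne
  have hZ1le : Zfun 1 (fun x => q * φ x - t₁ * ψ x) ≤ ENNReal.ofReal (Real.exp L) := by
    rw [hL, Real.exp_log hZ1pos, ENNReal.ofReal_toReal hZ1.ne]
  set s : ℝ := max 0 ((L + 1) / δ) with hs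
  have hs0 : 0 ≤ s := le_max_left _ _
  have hsδ : L + 1 ≤ s * δ := by
    rcases le_or_gt (L + 1) 0 with hc | hc
    · exact le_trans hc (mul_nonneg hs0 hδ.le)
    · have h1 : (L + 1) / δ ≤ s := le_max_right _ _
      calc L + 1 = (L + 1) / δ * δ := by field_simp
        _ ≤ s * δ := mul_le_mul_of_nonneg_right h1 hδ.le
  refine ⟨t₁ + s, ?_⟩
  have hkey : ∀ n : ℕ, 1 ≤ n →
      Zfun n (fun x => q * φ x - (t₁ + s) * ψ x)
        ≤ ENNReal.ofReal (Real.exp (s * W - s * δ * n + n * L)) := by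
    intro n hn
    have hZA : ∀ w : {w : List ℕ+ // w.length = n},
        ZA (fun x => q * φ x - (t₁ + s) * ψ x) n w
          ≤ ENNReal.ofReal (Real.exp (s * W - s * δ * n))
            * ZA (fun x => q * φ x - t₁ * ψ x) n w := by
      intro w
      refine iSup₂_le fun y hy => ?_
      have hbk : birkhoff (fun x => q * φ x - (t₁ + s) * ψ x) n y
          = birkhoff (fun x => q * φ x - t₁ * ψ x) n y - s * birkhoff ψ n y := by
        have hfun : (fun x => q * φ x - (t₁ + s) * ψ x)
            = fun x => (q * φ x - t₁ * ψ x) - s * ψ x := by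
          funext x; ring
        rw [hfun, birkhoff_sub (fun x => q * φ x - t₁ * ψ x) ψ s n y]
      have hineq : birkhoff (fun x => q * φ x - (t₁ + s) * ψ x) n y
          ≤ (s * W - s * δ * n) + birkhoff (fun x => q * φ x - t₁ * ψ x) n y := by
        rw [hbk]
        have h1 := hbl n y
        nlinarith [mul_le_mul_of_nonneg_left h1 hs0]
      calc ENNReal.ofReal (Real.exp (birkhoff (fun x => q * φ x - (t₁ + s) * ψ x) n y))
          ≤ ENNReal.ofReal (Real.exp ((s * W - s * δ * n)
              + birkhoff (fun x => q * φ x - t₁ * ψ x) n y)) :=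
            ENNReal.ofReal_le_ofReal (Real.exp_le_exp.2 hineq)
        _ = ENNReal.ofReal (Real.exp (s * W - s * δ * n))
              * ENNReal.ofReal (Real.exp (birkhoff (fun x => q * φ x - t₁ * ψ x) n y)) := by
            rw [Real.exp_add, ENNReal.ofReal_mul (Real.exp_nonneg _)]
        _ ≤ ENNReal.ofReal (Real.exp (s * W - s * δ * n))
              * ZA (fun x => q * φ x - t₁ * ψ x) n w :=
            mul_le_mul_right (le_ZA w hy) _
    calc Zfun n (fun x => q * φ x - (t₁ + s) * ψ x)
        ≤ ENNReal.ofReal (Real.exp (s * W - s * δ * n))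
            * Zfun n (fun x => q * φ x - t₁ * ψ x) := by
          rw [Zfun_eq_tsum_ZA, Zfun_eq_tsum_ZA, ← ENNReal.tsum_mul_left]
          exact ENNReal.tsum_le_tsum hZA
      _ ≤ ENNReal.ofReal (Real.exp (s * W - s * δ * n))
            * (Zfun 1 (fun x => q * φ x - t₁ * ψ x)) ^ n :=
          mul_le_mul_right (Zfun_le_pow _ n) _
      _ ≤ ENNReal.ofReal (Real.exp (s * W - s * δ * n))
            * (ENNReal.ofReal (Real.exp L)) ^ n :=
          mul_le_mul_right (pow_le_pow_left' hZ1le n) _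
      _ = ENNReal.ofReal (Real.exp (s * W - s * δ * n + n * L)) := by
          rw [← ENNReal.ofReal_pow (Real.exp_nonneg _), ← Real.exp_nat_mul,
            ← ENNReal.ofReal_mul (Real.exp_nonneg _), ← Real.exp_add]
  refine limsup_le_of_le (by isBoundedDefault) ?_
  filter_upwards [eventually_ge_atTop 1, eventually_ge_atTop ⌈s * W⌉₊] with n hn1 hn2
  refine (elog_div_le hn1 (hkey n hn1)).trans ?_
  rw [show (0:EReal) = ((0:ℝ):EReal) by simp, EReal.coe_le_coe_iff]
  have hnR : (0:ℝ) < n := by exact_mod_cast hn1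
  have hsW : s * W ≤ n := le_trans (Nat.le_ceil _) (by exact_mod_cast hn2)
  have hnum : s * W - s * δ * n + n * L ≤ 0 := by nlinarith
  exact div_nonpos_of_nonpos_of_nonneg hnum hnR.le

end main

/-- Proposition 2.9: the set `Q = {q | T(q) = t̃(q)}` is
order-connected. -/
theorem Qset_ordConnected
    (φ ψ : ShiftSpace → ℝ)
    (hφ : LocHolder φ) (hφneg : ∀ x, φ x < 0)
    (hψ : LocHolder ψ) (hψpos : ∀ x, 0 < ψ x)
    (αlim : ℝ)
    (hαlim : Tendsto (fun i : ℕ+ => φ (constSeq i) / (-ψ (constSeq i))) atTop (nhds αlim))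
    (hαlim₀ : 0 < αlim)
    (htinf₁ : (tinfSet ψ).Nonempty) (htinf₂ : BddBelow (tinfSet ψ))
    :
    ∀ q ∈ Qset φ ψ, ∀ q' ∈ Qset φ ψ, ∀ r : ℝ, q ≤ r → r ≤ q' → r ∈ Qset φ ψ := by
  intro q hq q' hq' r hqr hrq'
  have httilde : ∀ u : ℝ, ttilde φ ψ u = tinfty ψ - u * αlim :=
    fun u => ttilde_eq hφ hψ hψpos hαlim htinf₁ htinf₂ u
  have hAne : ∀ u : ℝ, {t : ℝ | pressure (fun x => u * φ x - t * ψ x) ≤ 0}.Nonempty :=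
    fun u => A_nonempty hφ hψ hψpos hαlim htinf₁ htinf₂ u
  have hAlb : ∀ u : ℝ, ∀ t ∈ {t : ℝ | pressure (fun x => u * φ x - t * ψ x) ≤ 0},
      tinfty ψ - u * αlim ≤ t := by
    intro u t ht
    refine B_le hφ hψ hψpos hαlim htinf₂ (lt_of_le_of_lt ht ?_)
    exact lt_top_iff_ne_top.2 (by simp)
  have hAbdd : ∀ u : ℝ, BddBelow {t : ℝ | pressure (fun x => u * φ x - t * ψ x) ≤ 0} :=
    fun u => ⟨tinfty ψ - u * αlim, hAlb u⟩
  have hTge : ∀ u : ℝ, tinfty ψ - u * αlim ≤ Tfun φ ψ u :=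
    fun u => le_csInf (hAne u) (hAlb u)
  rcases eq_or_lt_of_le hqr with h1 | h1
  · rw [← h1]; exact hq
  rcases eq_or_lt_of_le hrq' with h2 | h2
  · rw [h2]; exact hq'
  have hqq' : q < q' := h1.trans h2
  have hne : q' - q ≠ 0 := by linarith
  set l : ℝ := (q' - r) / (q' - q) with hl_def
  set m : ℝ := (r - q) / (q' - q) with hm_def
  have hl : 0 < l := div_pos (by linarith) (by linarith)
  have hm : 0 < m := div_pos (by linarith) (by linarith)
  have hlm : l + m = 1 := by rw [hl_def, hm_def]; field_simp; ring
  have hr : l * q + m * q' = r := by rw [hl_def, hm_def]; field_simp; ring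
  have hconv : ∀ t₁ ∈ {t : ℝ | pressure (fun x => q * φ x - t * ψ x) ≤ 0},
      ∀ t₂ ∈ {t : ℝ | pressure (fun x => q' * φ x - t * ψ x) ≤ 0},
      l * t₁ + m * t₂ ∈ {t : ℝ | pressure (fun x => r * φ x - t * ψ x) ≤ 0} := by
    intro t₁ ht₁ t₂ ht₂
    have hp := pressure_convex hl hm hlm ht₁ ht₂
    have hfun : (fun x => l * (q * φ x - t₁ * ψ x) + m * (q' * φ x - t₂ * ψ x))
        = fun x => r * φ x - (l * t₁ + m * t₂) * ψ x := by
      funext x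
      rw [← hr]
      ring
    rwa [hfun] at hp
  have hstep : Tfun φ ψ r ≤ l * Tfun φ ψ q + m * Tfun φ ψ q' := by
    have k1 : ∀ t₂ ∈ {t : ℝ | pressure (fun x => q' * φ x - t * ψ x) ≤ 0},
        Tfun φ ψ r ≤ l * Tfun φ ψ q + m * t₂ := by
      intro t₂ ht₂
      have k0 : ∀ t₁ ∈ {t : ℝ | pressure (fun x => q * φ x - t * ψ x) ≤ 0},
          (Tfun φ ψ r - m * t₂) / l ≤ t₁ := by
        intro t₁ ht₁
        have hc := csInf_le (hAbdd r) (hconv t₁ ht₁ t₂ ht₂)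
        rw [div_le_iff₀ hl]
        have : Tfun φ ψ r ≤ l * t₁ + m * t₂ := hc
        linarith
      have hc := le_csInf (hAne q) k0
      rw [div_le_iff₀ hl] at hc
      have hc' : Tfun φ ψ r - m * t₂ ≤ Tfun φ ψ q * l := hc
      linarith
    have k2 : ∀ t₂ ∈ {t : ℝ | pressure (fun x => q' * φ x - t * ψ x) ≤ 0},
        (Tfun φ ψ r - l * Tfun φ ψ q) / m ≤ t₂ := by
      intro t₂ ht₂
      rw [div_le_iff₀ hm]
      linarith [k1 t₂ ht₂]
    have hc := le_csInf (hAne q') k2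
    rw [div_le_iff₀ hm] at hc
    have hc' : Tfun φ ψ r - l * Tfun φ ψ q ≤ Tfun φ ψ q' * m := hc
    linarith
  have hTq : Tfun φ ψ q = tinfty ψ - q * αlim := by
    have h0 : Tfun φ ψ q = ttilde φ ψ q := hq
    rw [h0, httilde q]
  have hTq' : Tfun φ ψ q' = tinfty ψ - q' * αlim := by
    have h0 : Tfun φ ψ q' = ttilde φ ψ q' := hq'
    rw [h0, httilde q']
  show Tfun φ ψ r = ttilde φ ψ r
  rw [httilde r]
  apply le_antisymm
  · calc Tfun φ ψ r ≤ l * Tfun φ ψ q + m * Tfun φ ψ q' := hstep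
      _ = tinfty ψ - r * αlim := by
        rw [hTq, hTq']
        linear_combination (tinfty ψ) * hlm - αlim * hr
  · exact hTge r


end CMS
end
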